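/- Let K be ℝ or ℂ and let G be an abelian subgroup of GL(n,K). Then there do not exist points x_1, …, x_{n+1} ∈ K^n − {0} such that closure(G(x_1)) ⊆ closure(G(x_2)) ⊆ … ⊆ closure(G(x_{n+1})) with the n+1 closures pairwise distinct. (Equivalently, G has height at most n.) -/

import Mathlib

/-- The orbit of a vector `v` under a subgroup `G` of `GL(n, K)` acting linearly on `Kⁿ`. -/
def glOrbit {K : Type*} [Field K] {n : ℕ} (G : Subgroup (Matrix.GeneralLinearGroup (Fin n) K))
    (v : Fin n → K) : Set (Fin n → K) :=
  {w | ∃ A ∈ G, (A : Matrix (Fin n) (Fin n) K).mulVec v = w}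

set_option maxHeartbeats 1000000
set_option synthInstance.maxHeartbeats 1000000

noncomputable section
namespace HeightAux
variable {K : Type*} [RCLike K] {n : ℕ} (G : Subgroup (Matrix.GeneralLinearGroup (Fin n) K))

lemma mem_glOrbit_self (v : Fin n → K) : v ∈ glOrbit G v := ⟨1, one_mem G, by simp⟩

lemma smul_mem_glOrbit {A : Matrix.GeneralLinearGroup (Fin n) K} (hA : A ∈ G) {v w : Fin n → K}
    (hw : w ∈ glOrbit G v) : (A : Matrix (Fin n) (Fin n) K).mulVec w ∈ glOrbit G v := by
  obtain ⟨B, hB, rfl⟩ := hw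
  exact ⟨A * B, mul_mem hA hB, by simp [Matrix.mulVec_mulVec]⟩

lemma closure_glOrbit_subset {v w : Fin n → K} (hw : w ∈ closure (glOrbit G v)) :
    closure (glOrbit G w) ⊆ closure (glOrbit G v) := by
  apply closure_minimal _ isClosed_closure
  rintro _ ⟨A, hA, rfl⟩
  have hc : Continuous fun u : Fin n → K => (A : Matrix (Fin n) (Fin n) K).mulVec u :=
    ((A : Matrix (Fin n) (Fin n) K).mulVecLin).continuous_of_finiteDimensional
  have := image_closure_subset_closure_image (s := glOrbit G v) hc ⟨w, hw, rfl⟩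
  refine closure_mono ?_ this
  rintro _ ⟨u, hu, rfl⟩
  exact smul_mem_glOrbit G hA hu

variable (W : Submodule K (Fin n → K))

def rho (hW : ∀ (A : G), ∀ v ∈ W, ((A : Matrix.GeneralLinearGroup (Fin n) K)
      : Matrix (Fin n) (Fin n) K).mulVec v ∈ W) (A : G) : W →L[K] W :=
  LinearMap.toContinuousLinearMap
    (((A : Matrix.GeneralLinearGroup (Fin n) K) : Matrix (Fin n) (Fin n) K).mulVecLin.restrict
      (fun v hv => hW A v hv))

variable (hW : ∀ (A : G), ∀ v ∈ W, ((A : Matrix.GeneralLinearGroup (Fin n) K)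
      : Matrix (Fin n) (Fin n) K).mulVec v ∈ W)

@[simp] lemma rho_apply_coe (A : G) (v : W) :
    (rho G W hW A v : Fin n → K)
      = ((A : Matrix.GeneralLinearGroup (Fin n) K) : Matrix (Fin n) (Fin n) K).mulVec v := rfl

lemma rho_mul (A B : G) : rho G W hW (A * B) = rho G W hW A * rho G W hW B := by
  ext v
  simp [Matrix.mulVec_mulVec, ContinuousLinearMap.mul_apply]

lemma rho_one : rho G W hW 1 = 1 := by
  ext v; simp

lemma rho_unit (A : G) : rho G W hW A * rho G W hW A⁻¹ = 1 := by
  rw [← rho_mul, mul_inv_cancel, rho_one]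

lemma image_range_rho (w : W) :
    (Subtype.val '' Set.range fun A : G => rho G W hW A w) = glOrbit G (w : Fin n → K) := by
  ext u
  constructor
  · rintro ⟨_, ⟨A, rfl⟩, rfl⟩
    exact ⟨A, A.2, rfl⟩
  · rintro ⟨A, hA, rfl⟩
    exact ⟨rho G W hW ⟨A, hA⟩ w, ⟨⟨A, hA⟩, rfl⟩, rfl⟩

lemma span_range_rho_top (w : W)
    (hw : Submodule.span K (glOrbit G (w : Fin n → K)) = W) :
    Submodule.span K (Set.range fun A : G => rho G W hW A w) = ⊤ := by
  apply Submodule.map_injective_of_injective (Submodule.injective_subtype W)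
  rw [Submodule.map_span, Submodule.map_top, Submodule.range_subtype]
  rw [show (W.subtype '' Set.range fun A : G => rho G W hW A w)
      = glOrbit G (w : Fin n → K) from image_range_rho G W hW w]
  exact hw

include hW in
lemma key (hGcomm : ∀ A ∈ G, ∀ B ∈ G, A * B = B * A) {y z : Fin n → K}
    (hyW : y ∈ W) (hzW : z ∈ W)
    (hspany : Submodule.span K (glOrbit G y) = W)
    (hspanz : Submodule.span K (glOrbit G z) = W)
    (hz : z ∈ closure (glOrbit G y)) :
    y ∈ closure (glOrbit G z) := by
  classical
  set y' : W := ⟨y, hyW⟩ with hy'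
  set z' : W := ⟨z, hzW⟩ with hz'
  have hLfd : FiniteDimensional K (W →L[K] W) :=
    Module.Finite.equiv (LinearMap.toContinuousLinearMap
      : (W →ₗ[K] W) ≃ₗ[K] (W →L[K] W))
  set S : Set (W →L[K] W) := Set.range (rho G W hW) with hS
  set V : Submodule K (W →L[K] W) := Submodule.span K S with hV
  have hGcomm' : ∀ A B : G, A * B = B * A := fun A B =>
    Subtype.ext (hGcomm A A.2 B B.2)
  have hcomm : ∀ T ∈ V, ∀ A : G, T * rho G W hW A = rho G W hW A * T := by
    intro T hT A
    induction hT using Submodule.span_induction with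
    | mem f hf =>
      obtain ⟨B, rfl⟩ := hf
      rw [← rho_mul, ← rho_mul, hGcomm']
    | zero =>
      ext v
      simp [ContinuousLinearMap.mul_apply]
    | add a b _ _ ha hb =>
      ext v
      have ha' := congrArg (fun f : W →L[K] W => f v) ha
      have hb' := congrArg (fun f : W →L[K] W => f v) hb
      simp only [ContinuousLinearMap.mul_apply, ContinuousLinearMap.add_apply] at ha' hb' ⊢
      rw [ha', hb', ← map_add]
    | smul c a _ ha =>
      ext v
      have ha' := congrArg (fun f : W →L[K] W => f v) ha
      simp only [ContinuousLinearMap.mul_apply, ContinuousLinearMap.smul_apply] at ha' ⊢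
      rw [ha', ← map_smul]
  have hspan_y : Submodule.span K (Set.range fun A : G => rho G W hW A y') = ⊤ :=
    span_range_rho_top G W hW y' hspany
  have hspan_z : Submodule.span K (Set.range fun A : G => rho G W hW A z') = ⊤ :=
    span_range_rho_top G W hW z' hspanz
  set φ : (W →L[K] W) →ₗ[K] W :=
    { toFun := fun T => T y'
      map_add' := fun f g => rfl
      map_smul' := fun c f => rfl } with hφ
  set φV : V →ₗ[K] W := φ.comp V.subtype with hφV
  have hker : ∀ T ∈ V, T y' = 0 → T = 0 := by
    rintro T hT hTy0
    have hall : ∀ A : G, T (rho G W hW A y') = 0 := by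
      intro A
      have := congrArg (fun f : W →L[K] W => f y') (hcomm T hT A)
      simpa [ContinuousLinearMap.mul_apply, hTy0] using this
    have hptw : ∀ v, T v = 0 := by
      intro v
      have hv : v ∈ Submodule.span K (Set.range fun A : G => rho G W hW A y') := by
        rw [hspan_y]; trivial
      induction hv using Submodule.span_induction with
      | mem w hw => obtain ⟨A, rfl⟩ := hw; exact hall A
      | zero => simp
      | add a b _ _ ha hb => simp_all [map_add]
      | smul c a _ ha => simp_all [map_smul]
    exact ContinuousLinearMap.ext fun v => by simpa using hptw v
  have hinj : Function.Injective φV := by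
    rintro ⟨T1, h1⟩ ⟨T2, h2⟩ h12
    have hmem : T1 - T2 ∈ V := by
      have hm2 : T1 + (-1 : K) • T2 ∈ V := V.add_mem h1 (V.smul_mem _ h2)
      have hm3 : T1 - T2 = T1 + (-1 : K) • T2 := by
        rw [show (-1 : K) • T2 = -T2 from neg_one_smul K T2]
        exact sub_eq_add_neg T1 T2
      rwa [hm3]
    have hz0 : (T1 - T2) y' = 0 := by
      have h13 : T1 y' = T2 y' := h12
      simp [ContinuousLinearMap.sub_apply, h13]
    have := hker _ hmem hz0
    exact Subtype.ext (sub_eq_zero.mp this)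
  have hsurj : Function.Surjective φV := by
    rw [← LinearMap.range_eq_top, eq_top_iff, ← hspan_y]
    rw [Submodule.span_le]
    rintro _ ⟨A, rfl⟩
    exact ⟨⟨rho G W hW A, Submodule.subset_span ⟨A, rfl⟩⟩, rfl⟩
  set e := LinearEquiv.ofBijective φV ⟨hinj, hsurj⟩ with he
  set T0 : V := e.symm z' with hT0
  set T : W →L[K] W := (T0 : W →L[K] W) with hT
  have hTy : T y' = z' := e.apply_symm_apply z'
  have horbE : z' ∈ closure (Set.range fun A : G => rho G W hW A y') := by
    rw [closure_subtype]
    rw [show (Subtype.val '' Set.range fun A : G => rho G W hW A y') = glOrbit G (y' : Fin n → K)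
      from image_range_rho G W hW y']
    exact hz
  have hg : Continuous fun v : W => ((e.symm v : V) : W →L[K] W) :=
    LinearMap.continuous_of_finiteDimensional (𝕜 := K) (E := W) (F' := W →L[K] W)
      (V.subtype.comp (e.symm : W →ₗ[K] V))
  have hTclos : T ∈ closure S := by
    have h1 := image_closure_subset_closure_image
      (s := Set.range fun A : G => rho G W hW A y') hg
    have h2 : T ∈ (fun v : W => ((e.symm v : V) : W →L[K] W)) ''
        closure (Set.range fun A : G => rho G W hW A y') := ⟨z', horbE, rfl⟩
    refine closure_mono ?_ (h1 h2)
    rintro _ ⟨_, ⟨A, rfl⟩, rfl⟩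
    show ((e.symm ((rho G W hW A) y') : V) : W →L[K] W) ∈ S
    have he2 : e ⟨rho G W hW A, Submodule.subset_span ⟨A, rfl⟩⟩ = rho G W hW A y' := rfl
    rw [← he2, e.symm_apply_apply]
    exact ⟨A, rfl⟩
  have hTV : T ∈ V := T0.2
  have hTcommA : ∀ A : G, T (rho G W hW A y') = rho G W hW A z' := by
    intro A
    have := congrArg (fun f : W →L[K] W => f y') (hcomm T hTV A)
    simpa [ContinuousLinearMap.mul_apply, hTy] using this
  have hTsurj : Function.Surjective T := by
    have hrange : LinearMap.range (T : W →ₗ[K] W) = ⊤ := by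
      rw [eq_top_iff, ← hspan_z, Submodule.span_le]
      rintro _ ⟨A, rfl⟩
      exact ⟨rho G W hW A y', hTcommA A⟩
    exact LinearMap.range_eq_top.mp hrange
  have hTinj : Function.Injective T :=
    (LinearMap.injective_iff_surjective (f := (T : W →ₗ[K] W))).mpr hTsurj
  set Teq := LinearEquiv.ofBijective ((T : W →ₗ[K] W)) ⟨hTinj, hTsurj⟩ with hTeq
  set Tinv : W →L[K] W :=
    LinearMap.toContinuousLinearMap (Teq.symm : W →ₗ[K] W) with hTinv
  have hTmulinv : T * Tinv = 1 := ContinuousLinearMap.ext fun v => by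
    simp only [ContinuousLinearMap.mul_apply, ContinuousLinearMap.one_apply]
    exact Teq.apply_symm_apply v
  have hinvmulT : Tinv * T = 1 := ContinuousLinearMap.ext fun v => by
    simp only [ContinuousLinearMap.mul_apply, ContinuousLinearMap.one_apply]
    exact Teq.symm_apply_apply v
  set u : (W →L[K] W)ˣ := ⟨T, Tinv, hTmulinv, hinvmulT⟩ with hu
  have hrhounit : ∀ A : G, Ring.inverse (rho G W hW A) = rho G W hW A⁻¹ := by
    intro A
    have h2 : rho G W hW A⁻¹ * rho G W hW A = 1 := by
      have := rho_unit G W hW A⁻¹; rwa [inv_inv] at this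
    exact Ring.inverse_unit ⟨rho G W hW A, rho G W hW A⁻¹, rho_unit G W hW A, h2⟩
  have hinvclos : ((u⁻¹ : (W →L[K] W)ˣ) : W →L[K] W) ∈ closure S := by
    obtain ⟨f, hfS, hft⟩ := mem_closure_iff_seq_limit.mp hTclos
    choose A hA using fun k => hfS k
    apply mem_closure_iff_seq_limit.mpr
    refine ⟨fun k => rho G W hW (A k)⁻¹, fun k => ⟨(A k)⁻¹, rfl⟩, ?_⟩
    have hca : ContinuousAt Ring.inverse ((u : (W →L[K] W)ˣ) : W →L[K] W) :=
      NormedRing.inverse_continuousAt (R := W →L[K] W) u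
    have huT : ((u : (W →L[K] W)ˣ) : W →L[K] W) = T := rfl
    rw [huT] at hca
    have hcont := hca.tendsto.comp hft
    have heq : (Ring.inverse ∘ f) = fun k => rho G W hW (A k)⁻¹ := by
      funext k
      show Ring.inverse (f k) = _
      rw [← hA k, hrhounit]
    rw [heq] at hcont
    have hiu : Ring.inverse T = ((u⁻¹ : (W →L[K] W)ˣ) : W →L[K] W) := by
      rw [← huT]; exact Ring.inverse_unit u
    rwa [hiu] at hcont
  haveI : FiniteDimensional K (W →L[K] W) := hLfd
  have hevz : Continuous fun f : W →L[K] W => f z' :=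
    LinearMap.continuous_of_finiteDimensional (𝕜 := K) (E := W →L[K] W) (F' := W)
      ({ toFun := fun f : W →L[K] W => f z'
         map_add' := fun f g => ContinuousLinearMap.add_apply f g z'
         map_smul' := fun c f => rfl }
        : (W →L[K] W) →ₗ[K] W)
  have h4 : ((u⁻¹ : (W →L[K] W)ˣ) : W →L[K] W) z'
      ∈ closure (Set.range fun A : G => rho G W hW A z') := by
    have h1 := image_closure_subset_closure_image (s := S) hevz
    have h2 : ((u⁻¹ : (W →L[K] W)ˣ) : W →L[K] W) z'
        ∈ (fun f : W →L[K] W => f z') '' closure S := ⟨_, hinvclos, rfl⟩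
    refine closure_mono ?_ (h1 h2)
    rintro _ ⟨_, ⟨A, rfl⟩, rfl⟩
    exact ⟨A, rfl⟩
  have hyz : ((u⁻¹ : (W →L[K] W)ˣ) : W →L[K] W) z' = y' := by
    have h5 : (((u⁻¹ : (W →L[K] W)ˣ) : W →L[K] W) * T) y' = y' := by
      have h6 := u.inv_mul
      rw [show ((u : (W →L[K] W)ˣ) : W →L[K] W) = T from rfl] at h6
      rw [h6]
      rfl
    calc ((u⁻¹ : (W →L[K] W)ˣ) : W →L[K] W) z'
        = ((u⁻¹ : (W →L[K] W)ˣ) : W →L[K] W) (T y') := by rw [hTy]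
      _ = y' := h5
  rw [hyz] at h4
  have h6 := closure_subtype.mp h4
  rw [show (Subtype.val '' Set.range fun A : G => rho G W hW A z') = glOrbit G (z' : Fin n → K)
    from image_range_rho G W hW z'] at h6
  exact h6



lemma mem_closure_symm (hGcomm : ∀ A ∈ G, ∀ B ∈ G, A * B = B * A) {y z : Fin n → K}
    (hspan : Submodule.span K (glOrbit G z) = Submodule.span K (glOrbit G y))
    (hz : z ∈ closure (glOrbit G y)) : y ∈ closure (glOrbit G z) := by
  have hWinv : ∀ (A : G), ∀ v ∈ Submodule.span K (glOrbit G y),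
      ((A : Matrix.GeneralLinearGroup (Fin n) K) : Matrix (Fin n) (Fin n) K).mulVec v
        ∈ Submodule.span K (glOrbit G y) := by
    intro A v hv
    induction hv using Submodule.span_induction with
    | mem w hw => exact Submodule.subset_span (smul_mem_glOrbit G A.2 hw)
    | zero => simp [Matrix.mulVec_zero]
    | add a b _ _ ha hb => rw [Matrix.mulVec_add]; exact add_mem ha hb
    | smul c a _ ha => rw [Matrix.mulVec_smul]; exact Submodule.smul_mem _ c ha
  exact key G (Submodule.span K (glOrbit G y)) hWinv hGcomm
    (Submodule.subset_span (mem_glOrbit_self G y))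
    (closure_minimal Submodule.subset_span (Submodule.closed_of_finiteDimensional _) hz)
    rfl hspan hz

end HeightAux

open HeightAux in
/-- Let `K = ℝ` or `ℂ` and let `G` be an abelian subgroup of `GL(n, K)`. Then there do not
exist points `x₁, …, x_{n+1} ∈ Kⁿ \ {0}` with `closure(G(x₁)) ⊆ ⋯ ⊆ closure(G(x_{n+1}))`
and the `n+1` closures pairwise distinct; i.e. `G` has height at most `n`. -/
theorem height_le_n {K : Type*} [RCLike K] (n : ℕ)
    (G : Subgroup (Matrix.GeneralLinearGroup (Fin n) K))
    (hGcomm : ∀ A ∈ G, ∀ B ∈ G, A * B = B * A) :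
    ¬ ∃ x : Fin (n + 1) → (Fin n → K),
      (∀ i, x i ≠ 0) ∧
      (∀ i j : Fin (n + 1), i ≤ j → closure (glOrbit G (x i)) ⊆ closure (glOrbit G (x j))) ∧
      (∀ i j : Fin (n + 1), i ≠ j → closure (glOrbit G (x i)) ≠ closure (glOrbit G (x j))) := by
  rintro ⟨x, hx0, hmono, hne⟩
  set Sp : Fin (n + 1) → Submodule K (Fin n → K) :=
    fun i => Submodule.span K (glOrbit G (x i)) with hSp
  have hle : ∀ i j : Fin (n + 1), i ≤ j → Sp i ≤ Sp j := by
    intro i j hij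
    apply Submodule.span_le.mpr
    intro w hw
    have h1 : w ∈ closure (glOrbit G (x j)) := hmono i j hij (subset_closure hw)
    exact closure_minimal Submodule.subset_span
      (Submodule.closed_of_finiteDimensional _) h1
  have hlt : ∀ i j : Fin (n + 1), i < j → Sp i < Sp j := by
    intro i j hij
    refine lt_of_le_of_ne (hle i j hij.le) ?_
    intro heq
    have hzi : x i ∈ closure (glOrbit G (x j)) :=
      hmono i j hij.le (subset_closure (mem_glOrbit_self G (x i)))
    have heq' : Submodule.span K (glOrbit G (x i)) = Submodule.span K (glOrbit G (x j)) :=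
      heq
    have hxj : x j ∈ closure (glOrbit G (x i)) :=
      mem_closure_symm G hGcomm heq' hzi
    have h2 : closure (glOrbit G (x j)) ⊆ closure (glOrbit G (x i)) :=
      closure_glOrbit_subset G hxj
    exact hne i j hij.ne (subset_antisymm (hmono i j hij.le) h2)
  have hbase : 0 < Module.finrank K (Sp ⟨0, Nat.succ_pos n⟩) := by
    apply Module.finrank_pos_iff_exists_ne_zero.mpr
    refine ⟨⟨x ⟨0, Nat.succ_pos n⟩, Submodule.subset_span (mem_glOrbit_self G (x ⟨0, Nat.succ_pos n⟩))⟩, ?_⟩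
    intro hzero
    exact hx0 ⟨0, Nat.succ_pos n⟩ (by simpa using congrArg Subtype.val hzero)
  have hstep : ∀ m : ℕ, ∀ h : m < n + 1, m + 1 ≤ Module.finrank K (Sp ⟨m, h⟩) := by
    intro m
    induction m with
    | zero => intro h; exact Nat.succ_le_of_lt hbase
    | succ k ih =>
      intro h
      have hk : k < n + 1 := Nat.lt_of_succ_lt h
      have hlt' : Sp ⟨k, hk⟩ < Sp ⟨k + 1, h⟩ :=
        hlt _ _ (by simp [Fin.lt_def])
      have := Submodule.finrank_lt_finrank_of_lt hlt'
      have := ih hk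
      omega
  have hfin := hstep n (Nat.lt_succ_self n)
  have hle2 : Module.finrank K (Sp ⟨n, Nat.lt_succ_self n⟩) ≤ Module.finrank K (Fin n → K) :=
    Submodule.finrank_le _
  rw [Module.finrank_fin_fun] at hle2
  omega
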